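/- Fix an integer m ≥ 1 and integers a, b with 0 ≤ a, b ≤ m−1 and a + b ≤ m−1. Then in ℚ[[x]] one has p_a(x)·p_b(x) = p_m(x)·(Σ_{u≥0} D_m(a, b; u)·x^u); equivalently, the coefficient of x^u in p_a(x)·p_b(x)·p_m(x)^{−1} equals D_m(a,b;u) for every u ≥ 0. -/

import Mathlib

/-- The Chebyshev-type polynomial sequence: `p 0 = p 1 = 1`,
`p (r+2) = p (r+1) - X * p r`. -/
noncomputable def chebP : ℕ → Polynomial ℚ
  | 0 => 1
  | 1 => 1
  | (r+2) => chebP (r+1) - Polynomial.X * chebP r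

/-- The height of a lattice path after its first `i` steps, where the path is
encoded as `st : Fin n → Bool` (`true` = up-step `U = (1,1)`,
`false` = down-step `D = (1,-1)`), starting at `(0,0)`. -/
def heightAt {n : ℕ} (st : Fin n → Bool) (i : ℕ) : ℤ :=
  ∑ j ∈ Finset.univ.filter (fun j : Fin n => (j : ℕ) < i),
    (if st j then (1 : ℤ) else -1)

/-- `dyckCount m a b u` is the number of Dyck paths (lattice paths from `(0,0)`
ending on the x-axis with steps `U = (1,1)`, `D = (1,-1)` that never go below
the x-axis) of height at most `m-1` and semilength `m-1-b+u` whose first `a`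
steps are up-steps and whose last `m-1-b` steps are down-steps. -/
noncomputable def dyckCount (m a b u : ℕ) : ℕ :=
  Nat.card {st : Fin (2 * (m - 1 - b + u)) → Bool //
    heightAt st (2 * (m - 1 - b + u)) = 0 ∧
    (∀ i ≤ 2 * (m - 1 - b + u), 0 ≤ heightAt st i ∧ heightAt st i ≤ (m : ℤ) - 1) ∧
    (∀ j : Fin (2 * (m - 1 - b + u)), (j : ℕ) < a → st j = true) ∧
    (∀ j : Fin (2 * (m - 1 - b + u)),
        2 * (m - 1 - b + u) - (m - 1 - b) ≤ (j : ℕ) → st j = false)}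

namespace S5

lemma heightAt_eq_sum {n : ℕ} (st : Fin n → Bool) (i : ℕ) :
    heightAt st i = ∑ j : Fin n, if (j : ℕ) < i then (if st j then (1:ℤ) else -1) else 0 := by
  rw [heightAt, Finset.sum_filter]

lemma heightAt_zero {n : ℕ} (st : Fin n → Bool) : heightAt st 0 = 0 := by
  rw [heightAt_eq_sum]; simp

lemma heightAt_cons {n : ℕ} (c : Bool) (x : Fin n → Bool) (i : ℕ) :
    heightAt (Fin.cons c x) (i + 1) = (if c then (1:ℤ) else -1) + heightAt x i := by
  rw [heightAt_eq_sum, heightAt_eq_sum, Fin.sum_univ_succ]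
  simp only [Fin.cons_zero, Fin.cons_succ, Fin.val_zero, Fin.val_succ]
  congr 1
  · simp

lemma card_bool_prod {γ : Type*} [Finite γ] (Q : Bool × γ → Prop) :
    Nat.card {p : Bool × γ // Q p}
      = Nat.card {x : γ // Q (true, x)} + Nat.card {x : γ // Q (false, x)} := by
  rw [← Nat.card_sum]
  apply Nat.card_congr
  exact {
    toFun := fun p => match p with
      | ⟨(true, x), h⟩ => Sum.inl ⟨x, h⟩
      | ⟨(false, x), h⟩ => Sum.inr ⟨x, h⟩
    invFun := fun s => match s with
      | Sum.inl ⟨x, h⟩ => ⟨(true, x), h⟩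
      | Sum.inr ⟨x, h⟩ => ⟨(false, x), h⟩
    left_inv := by rintro ⟨⟨(_|_), x⟩, h⟩ <;> rfl
    right_inv := by rintro (⟨x, h⟩ | ⟨x, h⟩) <;> rfl }

/-- walk/path counter: `wck m k n h a'` counts paths of length `n` starting at
height `h`, ending at height `0`, staying within `[0, m-1]`, whose first `a'`
steps are up and whose last `k` steps are down. -/
def wck (m k : ℕ) : ℕ → ℕ → ℕ → ℕ
  | 0, h, _ => if h = 0 then 1 else 0
  | (n+1), h, a' =>
      (if k ≤ n ∧ h + 2 ≤ m then wck m k n (h+1) (a'-1) else 0) +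
      (if a' = 0 ∧ 1 ≤ h then wck m k n (h-1) 0 else 0)

/-- the path predicate -/
def Pred (m k n h a' : ℕ) (st : Fin n → Bool) : Prop :=
  ((h:ℤ) + heightAt st n = 0) ∧
  (∀ i ≤ n, 0 ≤ (h:ℤ) + heightAt st i ∧ (h:ℤ) + heightAt st i ≤ (m:ℤ) - 1) ∧
  (∀ i' : Fin n, (i':ℕ) < a' → st i' = true) ∧
  (∀ i' : Fin n, n - k ≤ (i':ℕ) → st i' = false)

lemma pred_cons_true (m k n h a' : ℕ) (hm : 1 ≤ m) (hh : h ≤ m - 1)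
    (hk : k ≤ n) (hup : h + 2 ≤ m) (x : Fin n → Bool) :
    Pred m k (n+1) h a' (Fin.cons true x) ↔ Pred m k n (h+1) (a'-1) x := by
  unfold Pred
  constructor
  · rintro ⟨c1, c2, c3, c4⟩
    refine ⟨?_, ?_, ?_, ?_⟩
    · have := heightAt_cons true x n
      push_cast; push_cast at c1; rw [heightAt_cons] at c1; simp at c1; linarith
    · intro i hi
      have := c2 (i+1) (by omega)
      rw [heightAt_cons] at this; simp at this
      push_cast
      constructor <;> linarith [this.1, this.2]
    · intro i' hi'
      have := c3 i'.succ (by simp; omega)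
      simpa using this
    · intro i' hi'
      have := c4 i'.succ (by simp; omega)
      simpa using this
  · rintro ⟨c1, c2, c3, c4⟩
    have hhz : (h:ℤ) ≤ (m:ℤ) - 1 := by omega
    refine ⟨?_, ?_, ?_, ?_⟩
    · rw [heightAt_cons]; simp; push_cast at c1; linarith
    · intro i hi
      match i with
      | 0 => rw [heightAt_zero]; constructor <;> simp <;> omega
      | (t+1) =>
        have := c2 t (by omega)
        rw [heightAt_cons]; simp; push_cast at this
        constructor <;> linarith [this.1, this.2]
    · intro i' hi'
      rcases Fin.eq_zero_or_eq_succ i' with h0 | ⟨j, rfl⟩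
      · subst h0; simp
      · simp only [Fin.cons_succ]
        apply c3
        have : (j.succ : ℕ) = (j:ℕ)+1 := rfl
        omega
    · intro i' hi'
      rcases Fin.eq_zero_or_eq_succ i' with h0 | ⟨j, rfl⟩
      · exfalso; subst h0; simp at hi'; omega
      · simp only [Fin.cons_succ]
        apply c4
        have : (j.succ : ℕ) = (j:ℕ)+1 := rfl
        omega

lemma pred_cons_false (m k n h a' : ℕ) (hm : 1 ≤ m) (hh : h ≤ m - 1)
    (ha : a' = 0) (hd : 1 ≤ h) (x : Fin n → Bool) :
    Pred m k (n+1) h a' (Fin.cons false x) ↔ Pred m k n (h-1) 0 x := by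
  subst ha
  unfold Pred
  have hcast : ((h-1 : ℕ) : ℤ) = (h:ℤ) - 1 := by omega
  constructor
  · rintro ⟨c1, c2, c3, c4⟩
    refine ⟨?_, ?_, ?_, ?_⟩
    · rw [heightAt_cons] at c1; simp at c1; rw [hcast]; linarith
    · intro i hi
      have := c2 (i+1) (by omega)
      rw [heightAt_cons] at this; simp at this
      rw [hcast]
      constructor <;> linarith [this.1, this.2]
    · intro i' hi'; omega
    · intro i' hi'
      have := c4 i'.succ (by simp; omega)
      simpa using this
  · rintro ⟨c1, c2, c3, c4⟩
    have hhz : (h:ℤ) ≤ (m:ℤ) - 1 := by omega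
    refine ⟨?_, ?_, ?_, ?_⟩
    · rw [heightAt_cons]; simp; rw [hcast] at c1; linarith
    · intro i hi
      match i with
      | 0 => rw [heightAt_zero]; constructor <;> simp <;> omega
      | (t+1) =>
        have := c2 t (by omega)
        rw [heightAt_cons]; simp; rw [hcast] at this
        constructor <;> linarith [this.1, this.2]
    · intro i' hi'; omega
    · intro i' hi'
      rcases Fin.eq_zero_or_eq_succ i' with h0 | ⟨j, rfl⟩
      · subst h0; simp
      · simp only [Fin.cons_succ]
        apply c4
        have : (j.succ : ℕ) = (j:ℕ)+1 := rfl
        omega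



lemma heightAt_one {n : ℕ} (c : Bool) (x : Fin n → Bool) :
    heightAt (Fin.cons c x) 1 = if c then (1:ℤ) else -1 := by
  have := heightAt_cons c x 0
  rw [heightAt_zero] at this
  simpa using this

lemma card_master (m k : ℕ) (hm : 1 ≤ m) :
    ∀ n h a', h ≤ m - 1 →
      Nat.card {st : Fin n → Bool // Pred m k n h a' st} = wck m k n h a' := by
  intro n
  induction n with
  | zero =>
    intro h a' hh
    by_cases h0 : h = 0
    · subst h0
      have hall : ∀ st : Fin 0 → Bool, Pred m k 0 0 a' st := by
        intro st
        refine ⟨by simp [heightAt_zero], ?_, by intro i'; exact absurd i'.2 (by omega),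
          by intro i'; exact absurd i'.2 (by omega)⟩
        intro i hi
        interval_cases i
        rw [heightAt_zero]
        constructor <;> simp <;> omega
      haveI : Unique {st : Fin 0 → Bool // Pred m k 0 0 a' st} :=
        ⟨⟨default, hall default⟩, fun x => Subtype.ext (Subsingleton.elim _ _)⟩
      simp [wck, Nat.card_unique]
    · haveI : IsEmpty {st : Fin 0 → Bool // Pred m k 0 h a' st} := by
        constructor; rintro ⟨st, hst⟩
        have := hst.1
        rw [heightAt_zero] at this
        omega
      simp [wck, Nat.card_of_isEmpty, h0]
  | succ n IH =>
    intro h a' hh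
    have ecard : Nat.card {st : Fin (n+1) → Bool // Pred m k (n+1) h a' st}
        = Nat.card {pr : Bool × (Fin n → Bool) // Pred m k (n+1) h a' (Fin.cons pr.1 pr.2)} := by
      apply Nat.card_congr
      exact ((Fin.consEquiv (fun _ => Bool)).subtypeEquiv (fun pr => Iff.rfl)).symm
    rw [ecard, card_bool_prod (fun pr => Pred m k (n+1) h a' (Fin.cons pr.1 pr.2))]
    have htrue : Nat.card {x : Fin n → Bool // Pred m k (n+1) h a' (Fin.cons true x)}
        = if k ≤ n ∧ h + 2 ≤ m then wck m k n (h+1) (a'-1) else 0 := by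
      by_cases hg : k ≤ n ∧ h + 2 ≤ m
      · rw [if_pos hg]
        rw [Nat.card_congr (Equiv.subtypeEquivRight
          (fun x => pred_cons_true m k n h a' hm hh hg.1 hg.2 x))]
        exact IH (h+1) (a'-1) (by omega)
      · rw [if_neg hg]
        haveI : IsEmpty {x : Fin n → Bool // Pred m k (n+1) h a' (Fin.cons true x)} := by
          constructor; rintro ⟨x, hx⟩
          by_cases hkn : k ≤ n
          · have hup : ¬ (h + 2 ≤ m) := fun hc => hg ⟨hkn, hc⟩
            have := (hx.2.1 1 (by omega)).2
            rw [heightAt_one] at this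
            simp at this
            omega
          · have := hx.2.2.2 ⟨0, by omega⟩ (by simp; omega)
            simp at this
        exact Nat.card_of_isEmpty
    have hfalse : Nat.card {x : Fin n → Bool // Pred m k (n+1) h a' (Fin.cons false x)}
        = if a' = 0 ∧ 1 ≤ h then wck m k n (h-1) 0 else 0 := by
      by_cases hg : a' = 0 ∧ 1 ≤ h
      · rw [if_pos hg]
        rw [Nat.card_congr (Equiv.subtypeEquivRight
          (fun x => pred_cons_false m k n h a' hm hh hg.1 hg.2 x))]
        exact IH (h-1) 0 (by omega)
      · rw [if_neg hg]
        haveI : IsEmpty {x : Fin n → Bool // Pred m k (n+1) h a' (Fin.cons false x)} := by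
          constructor; rintro ⟨x, hx⟩
          by_cases ha0 : a' = 0
          · have hd : ¬ (1 ≤ h) := fun hc => hg ⟨ha0, hc⟩
            have := (hx.2.1 1 (by omega)).1
            rw [heightAt_one] at this
            simp at this
            omega
          · have := hx.2.2.1 ⟨0, by omega⟩ (by simp; omega)
            simp at this
        exact Nat.card_of_isEmpty
    rw [htrue, hfalse]
    rfl


lemma wck_descent (m k : ℕ) : ∀ n, n ≤ k → ∀ h, wck m k n h 0 = if h = n then 1 else 0 := by
  intro n
  induction n with
  | zero => intro _ h; rfl
  | succ n IH =>
    intro hn h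
    show (if k ≤ n ∧ h + 2 ≤ m then wck m k n (h+1) 0 else 0) +
      (if 0 = 0 ∧ 1 ≤ h then wck m k n (h-1) 0 else 0) = _
    rw [if_neg (by omega)]
    by_cases hd : 1 ≤ h
    · rw [if_pos ⟨rfl, hd⟩, IH (by omega) (h-1)]
      by_cases he : h - 1 = n
      · rw [if_pos he, if_pos (by omega)]
      · rw [if_neg he, if_neg (by omega)]
    · rw [if_neg (by omega), if_neg (by omega)]

def wc (m k n h : ℕ) : ℕ := wck m k (n + k) h 0

lemma wc_zero (m k h : ℕ) : wc m k 0 h = if h = k then 1 else 0 := by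
  have := wck_descent m k k le_rfl h
  simpa [wc] using this

lemma wc_succ (m k n h : ℕ) :
    wc m k (n+1) h = (if h + 2 ≤ m then wc m k n (h+1) else 0) +
      (if 1 ≤ h then wc m k n (h-1) else 0) := by
  have : n + 1 + k = (n + k) + 1 := by omega
  rw [wc, this]
  show (if k ≤ n + k ∧ h + 2 ≤ m then wck m k (n+k) (h+1) 0 else 0) +
    (if 0 = 0 ∧ 1 ≤ h then wck m k (n+k) (h-1) 0 else 0) = _
  congr 1
  · by_cases hu : h + 2 ≤ m
    · rw [if_pos ⟨by omega, hu⟩, if_pos hu]; rfl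
    · rw [if_neg (by tauto), if_neg hu]
  · by_cases hd : 1 ≤ h
    · rw [if_pos ⟨rfl, hd⟩, if_pos hd]; rfl
    · rw [if_neg (by tauto), if_neg hd]

lemma wc_too_short (m k : ℕ) : ∀ n h, (n + h < k ∨ n + k < h) → wc m k n h = 0 := by
  intro n
  induction n with
  | zero =>
    intro h hh
    rw [wc_zero, if_neg (by omega)]
  | succ n IH =>
    intro h hh
    rw [wc_succ]
    rw [IH (h+1) (by omega)]
    by_cases hd : 1 ≤ h
    · rw [IH (h-1) (by omega)]; simp
    · simp [hd]

lemma wck_strip (m k : ℕ) : ∀ a' h n, h + a' ≤ m - 1 → k ≤ n →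
    wck m k (a' + n) h a' = wck m k n (h + a') 0 := by
  intro a'
  induction a' with
  | zero => intro h n _ _; simp
  | succ a' IH =>
    intro h n hh hk
    have : a' + 1 + n = (a' + n) + 1 := by omega
    rw [this]
    show (if k ≤ a' + n ∧ h + 2 ≤ m then wck m k (a'+n) (h+1) (a'+1-1) else 0) +
      (if a' + 1 = 0 ∧ 1 ≤ h then wck m k (a'+n) (h-1) 0 else 0) = _
    rw [if_pos ⟨by omega, by omega⟩, if_neg (by omega)]
    have h1 : a' + 1 - 1 = a' := by omega
    rw [h1, add_zero, IH (h+1) n (by omega) hk]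
    congr 1
    omega

lemma dyck_eq_wc' (m a b u k : ℕ) (hm : 1 ≤ m) (hk : k = m - 1 - b) (hak : a ≤ k)
    (hkm : k ≤ m - 1) :
    dyckCount m a b u = wc m k (k - a + 2 * u) a := by
  have hN : 2 * (m - 1 - b + u) = 2 * (k + u) := by rw [hk]
  have hstep1 : dyckCount m a b u = wck m k (2 * (m - 1 - b + u)) 0 a := by
    rw [dyckCount, ← card_master m k hm _ 0 a (by omega)]
    apply Nat.card_congr
    apply Equiv.subtypeEquivRight
    intro st
    unfold Pred
    rw [hk]
    push_cast
    simp only [zero_add]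
  rw [hstep1, hN]
  have h2 : 2 * (k + u) = a + ((k - a + 2*u) + k) := by omega
  rw [h2, wck_strip m k a 0 ((k - a + 2*u) + k) (by omega) (by omega)]
  rw [zero_add]
  rfl


noncomputable def cP (r : ℕ) : PowerSeries ℚ := (chebP r : PowerSeries ℚ)
lemma cP_zero : cP 0 = 1 := by simp [cP, chebP]
lemma cP_one : cP 1 = 1 := by simp [cP, chebP]
lemma cP_rec (r : ℕ) : cP (r+2) = cP (r+1) - PowerSeries.X * cP r := by
  rw [cP, chebP, Polynomial.coe_sub, Polynomial.coe_mul, Polynomial.coe_X]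
  rfl
lemma constCoeff_cP (r : ℕ) : PowerSeries.constantCoeff (R := ℚ) (cP r) = 1 := by
  induction r using Nat.twoStepInduction with
  | zero => rw [cP_zero]; simp
  | one => rw [cP_one]; simp
  | more n ih1 ih2 => rw [cP_rec, map_sub, map_mul]; simp [ih2]


noncomputable def G (m k h : ℕ) : PowerSeries ℚ :=
  PowerSeries.mk fun u => ((wc m k ((k - h) + (h - k) + 2*u) h : ℕ) : ℚ)

open PowerSeries

lemma coeff_X_mul_zero (f : PowerSeries ℚ) : PowerSeries.coeff (R := ℚ) 0 (PowerSeries.X * f) = 0 := by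
  simp


lemma coeff_G (m k h u : ℕ) :
    PowerSeries.coeff (R := ℚ) u (G m k h) = ((wc m k ((k - h) + (h - k) + 2*u) h : ℕ) : ℚ) :=
  PowerSeries.coeff_mk _ _

lemma R1 (m k : ℕ) (hk1 : 1 ≤ k) (hkm : k ≤ m - 1) : G m k 0 = G m k 1 := by
  ext u
  simp only [G, coeff_mk]
  have e1 : k - 0 + (0 - k) + 2*u = (k - 1 + (1 - k) + 2*u) + 1 := by omega
  rw [e1, wc_succ, if_pos (show 0 + 2 ≤ m by omega), if_neg (by omega)]
  norm_num

lemma R2 (m k h : ℕ) (h2k : h + 2 ≤ k) (hkm : k ≤ m - 1) :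
    G m k (h+1) = G m k (h+2) + PowerSeries.X * G m k h := by
  ext u
  rw [map_add]
  simp only [G, coeff_mk]
  have e1 : k - (h+1) + ((h+1) - k) + 2*u = (k - (h+2) + ((h+2)-k) + 2*u) + 1 := by omega
  rw [e1, wc_succ, if_pos (show (h+1) + 2 ≤ m by omega), if_pos (show 1 ≤ h + 1 by omega)]
  have e2 : h + 1 + 1 = h + 2 := rfl
  have e3 : h + 1 - 1 = h := rfl
  rw [e2, e3]
  rcases u with _ | u
  · rw [coeff_X_mul_zero]
    rw [wc_too_short m k _ h (by omega)]
    push_cast; ring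
  · rw [PowerSeries.coeff_succ_X_mul]
    simp only [coeff_mk]
    have e4 : wc m k (k - (h+2) + ((h+2)-k) + 2*(u+1)) h
        = wc m k (k - h + (h - k) + 2*u) h := by congr 1; omega
    rw [e4]
    push_cast; ring

lemma R3 (m k t : ℕ) (hkt : k ≤ t) (htm : t + 2 ≤ m - 1) :
    G m k (t+1) = G m k t + PowerSeries.X * G m k (t+2) := by
  ext u
  rw [map_add]
  simp only [G, coeff_mk]
  have e1 : k - (t+1) + ((t+1) - k) + 2*u = (k - t + (t-k) + 2*u) + 1 := by omega
  rw [e1, wc_succ, if_pos (show t + 1 + 2 ≤ m by omega), if_pos (show 1 ≤ t + 1 by omega)]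
  have e3 : t + 1 - 1 = t := rfl
  rw [e3]
  rcases u with _ | u
  · rw [coeff_X_mul_zero]
    rw [wc_too_short m k _ (t+1+1) (by omega)]
    push_cast; ring
  · rw [PowerSeries.coeff_succ_X_mul]
    simp only [coeff_mk]
    have e4 : wc m k (k - t + (t - k) + 2*(u+1)) (t+1+1)
        = wc m k (k - (t+2) + ((t+2) - k) + 2*u) (t+2) := by congr 1; omega
    rw [e4]
    push_cast; ring

lemma R4 (m k : ℕ) (hk2 : k ≤ m - 2) (hm2 : 2 ≤ m) : G m k (m-1) = G m k (m-2) := by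
  ext u
  simp only [G, coeff_mk]
  have e1 : k - (m-1) + ((m-1) - k) + 2*u = (k - (m-2) + ((m-2)-k) + 2*u) + 1 := by omega
  rw [e1, wc_succ, if_neg (by omega), if_pos (show 1 ≤ m - 1 by omega)]
  have e3 : m - 1 - 1 = m - 2 := by omega
  rw [e3]
  norm_num

lemma R5 (m k : ℕ) (hm : 1 ≤ m) (hkm : k ≤ m - 1) :
    G m k k = 1 + (if k + 2 ≤ m then PowerSeries.X * G m k (k+1) else 0) +
      (if 1 ≤ k then PowerSeries.X * G m k (k-1) else 0) := by
  ext u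
  rw [map_add, map_add, coeff_G]
  have ez : k - k + (k - k) + 2*u = 2*u := by omega
  rw [ez]
  rcases u with _ | u
  · rw [wc_zero, if_pos rfl]
    have h1 : (PowerSeries.coeff (R := ℚ) 0) (1 : PowerSeries ℚ) = 1 := by simp
    rw [h1]
    have h2 : (PowerSeries.coeff (R := ℚ) 0)
        (if k + 2 ≤ m then PowerSeries.X * G m k (k+1) else 0) = 0 := by
      split <;> simp [coeff_X_mul_zero]
    have h3 : (PowerSeries.coeff (R := ℚ) 0)
        (if 1 ≤ k then PowerSeries.X * G m k (k-1) else 0) = 0 := by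
      split <;> simp [coeff_X_mul_zero]
    rw [h2, h3]
    norm_num
  · have e1 : 2*(u+1) = (2*u + 1) + 1 := by omega
    rw [e1, wc_succ]
    have h1 : (PowerSeries.coeff (R := ℚ) (u+1)) (1 : PowerSeries ℚ) = 0 := by
      simp
    rw [h1]
    have h2 : (PowerSeries.coeff (R := ℚ) (u+1))
        (if k + 2 ≤ m then PowerSeries.X * G m k (k+1) else 0)
        = if k + 2 ≤ m then (wc m k (2*u+1) (k+1) : ℚ) else 0 := by
      split
      · rw [PowerSeries.coeff_succ_X_mul, coeff_G]
        congr 2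
        omega
      · simp
    have h3 : (PowerSeries.coeff (R := ℚ) (u+1))
        (if 1 ≤ k then PowerSeries.X * G m k (k-1) else 0)
        = if 1 ≤ k then (wc m k (2*u+1) (k-1) : ℚ) else 0 := by
      split
      · rw [PowerSeries.coeff_succ_X_mul, coeff_G]
        congr 2
        omega
      · simp
    rw [h2, h3]
    by_cases hu : k + 2 ≤ m <;> by_cases hd : 1 ≤ k <;>
      simp only [if_pos, if_neg, hu, hd, if_true, if_false] <;> push_cast <;> ring


lemma chainLow (m k : ℕ) (hkm : k ≤ m - 1) :
    ∀ h, h ≤ k → G m k h = cP h * G m k 0 := by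
  intro h
  induction h using Nat.twoStepInduction with
  | zero => intro _; rw [cP_zero, one_mul]
  | one => intro h1; rw [cP_one, one_mul, ← R1 m k h1 hkm]
  | more n ih1 ih2 =>
    intro hn
    have hr := R2 m k n (by omega) hkm
    have : G m k (n+2) = G m k (n+1) - PowerSeries.X * G m k n := by
      rw [hr]; ring
    rw [this, ih2 (by omega), ih1 (by omega), cP_rec]
    ring

lemma chainHigh (m k : ℕ) (hm : 1 ≤ m) (hkm : k ≤ m - 1) :
    ∀ t, t ≤ m - 1 - k → G m k (m-1-t) = cP t * G m k (m-1) := by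
  intro t
  induction t using Nat.twoStepInduction with
  | zero => intro _; rw [cP_zero, one_mul]; norm_num
  | one =>
    intro h1
    have e : m - 1 - 1 = m - 2 := by omega
    rw [cP_one, one_mul, e, ← R4 m k (by omega) (by omega)]
  | more n ih1 ih2 =>
    intro hn
    have hr := R3 m k (m-3-n) (by omega) (by omega)
    have e1 : m - 3 - n + 1 = m - 1 - (n+1) := by omega
    have e2 : m - 3 - n + 2 = m - 1 - n := by omega
    have e3 : m - 3 - n = m - 1 - (n+2) := by omega
    rw [e1, e2, e3] at hr
    have : G m k (m-1-(n+2)) = G m k (m-1-(n+1)) - PowerSeries.X * G m k (m-1-n) := by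
      rw [hr]; ring
    rw [this, ih2 (by omega), ih1 (by omega), cP_rec]
    ring

lemma cP_id : ∀ c d : ℕ, cP (c+1) * cP (d+1) - PowerSeries.X * cP c * cP d = cP (c+d+2) := by
  intro c
  induction c with
  | zero =>
    intro d
    rw [show 0+d+2 = d+2 from by omega, cP_one, cP_zero, cP_rec d]
    ring
  | succ c ih =>
    intro d
    have e : c + 1 + d + 2 = c + (d+1) + 2 := by omega
    rw [e]
    linear_combination ih (d+1) + cP (d+1) * cP_rec c - cP (c+1) * cP_rec d

/-- the key lemma: `p_m * G_0 = p_{m-1-k}` -/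
lemma main_inv (m k : ℕ) (hm : 1 ≤ m) (hkm : k ≤ m - 1) :
    cP m * G m k 0 = cP (m - 1 - k) := by
  have hR5 := R5 m k hm hkm
  by_cases hktop : k = m - 1
  · -- b = 0 case
    subst hktop
    rw [if_neg (by omega)] at hR5
    by_cases hk0 : m - 1 = 0
    · -- m = 1
      rw [hk0] at hR5 ⊢
      rw [if_neg (by omega)] at hR5
      have hm1 : m = 1 := by omega
      subst hm1
      simp only [add_zero, Nat.sub_self] at hR5 ⊢
      rw [cP_one, hR5]
      rw [cP_zero]
      ring
    · rw [if_pos (by omega)] at hR5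
      have hL1 := chainLow m (m-1) hkm (m-1) le_rfl
      have hL2 := chainLow m (m-1) hkm (m-1-1) (by omega)
      rw [hL1, hL2] at hR5
      have hcPm := cP_rec (m-1-1)
      rw [show m-1-1+2 = m from by omega, show m-1-1+1 = m-1 from by omega] at hcPm
      have hfin : cP m * G m (m-1) 0 = 1 := by
        rw [hcPm]
        linear_combination hR5
      rw [hfin]
      have : m - 1 - (m-1) = 0 := by omega
      rw [this, cP_zero]
  · -- k < m - 1
    have hk2 : k + 2 ≤ m := by omega
    rw [if_pos hk2] at hR5
    by_cases hk0 : k = 0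
    · subst hk0
      rw [if_neg (by omega)] at hR5
      have hH1 := chainHigh m 0 hm hkm (m-1) (by omega)
      have hH2 := chainHigh m 0 hm hkm (m-2) (by omega)
      have e1 : m - 1 - (m-1) = 0 := by omega
      have e2 : m - 1 - (m-2) = 1 := by omega
      rw [e1] at hH1
      rw [e2] at hH2
      rw [add_zero, hH1, hH2] at hR5
      have hcPm := cP_rec (m-2)
      rw [show m-2+2 = m from by omega, show m-2+1 = m-1 from by omega] at hcPm
      have hfin : cP m * G m 0 (m-1) = 1 := by
        rw [hcPm]
        linear_combination hR5
      rw [hH1]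
      have : m - 1 - 0 = m - 1 := by omega
      rw [this]
      calc cP m * (cP (m-1) * G m 0 (m-1)) = cP (m-1) * (cP m * G m 0 (m-1)) := by ring
        _ = cP (m-1) := by rw [hfin, mul_one]
    · -- 1 ≤ k ≤ m - 2 : generic case
      rw [if_pos (by omega)] at hR5
      set α := G m k 0 with hα
      set β := G m k (m-1) with hβ
      have hLk := chainLow m k hkm k le_rfl
      have hLk1 := chainLow m k hkm (k-1) (by omega)
      have hHk : G m k k = cP (m-1-k) * β := by
        have := chainHigh m k hm hkm (m-1-k) (by omega)
        have e : m - 1 - (m-1-k) = k := by omega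
        rwa [e] at this
      have hHk1 : G m k (k+1) = cP (m-2-k) * β := by
        have := chainHigh m k hm hkm (m-2-k) (by omega)
        have e : m - 1 - (m-2-k) = k + 1 := by omega
        rwa [e] at this
      -- equations
      have E1 : cP k * α = cP (m-1-k) * β := by rw [← hLk, hHk]
      have E2 : cP (m-1-k) * β = 1 + PowerSeries.X * (cP (m-2-k) * β)
          + PowerSeries.X * (cP (k-1) * α) := by
        rw [← hHk, hR5, hHk1, hLk1]
      -- the identity with c = k-1, d = m-2-k... need cP m = cP k * cP (m-1-k+1)... 
      have hid : cP k * cP (m-1-k) - PowerSeries.X * cP k * cP (m-2-k)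
          - PowerSeries.X * cP (k-1) * cP (m-1-k) = cP m := by
        have h1 := cP_id (k-1) (m-1-k)
        have e1 : k - 1 + 1 = k := by omega
        have e2 : k - 1 + (m-1-k) + 2 = m := by omega
        rw [e1, e2] at h1
        have h2 := cP_rec (m-2-k)
        have e3 : m - 2 - k + 2 = m - 1 - k + 1 := by omega
        have e4 : m - 2 - k + 1 = m - 1 - k := by omega
        rw [e3, e4] at h2
        -- h2 : cP (m-1-k+1) = cP (m-1-k) - X * cP (m-2-k)
        linear_combination h1 - cP k * h2
      linear_combination (-α) * hid + (cP (m-1-k) - PowerSeries.X * cP (m-2-k)) * E1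
        + cP (m-1-k) * E2

end S5

/-- fix `m ≥ 1` and `a, b` with `0 ≤ a, b ≤ m-1`, `a + b ≤ m-1`.
Then in `ℚ[[x]]` one has `p_a·p_b = p_m·(Σ_u D_m(a,b;u)·x^u)`; equivalently,
the coefficient of `x^u` in `p_a·p_b·p_m^{-1}` equals `D_m(a,b;u)` for all `u`. -/
theorem statement5 (m a b : ℕ) (hm : 1 ≤ m) (ha : a ≤ m - 1) (hb : b ≤ m - 1)
    (hab : a + b ≤ m - 1) :
    ((chebP a : PowerSeries ℚ) * (chebP b : PowerSeries ℚ)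
        = (chebP m : PowerSeries ℚ) *
            PowerSeries.mk (fun u => (dyckCount m a b u : ℚ))) ∧
    (∀ u : ℕ,
      PowerSeries.coeff (R := ℚ) u
        ((chebP a : PowerSeries ℚ) * (chebP b : PowerSeries ℚ) *
          ((chebP m : PowerSeries ℚ))⁻¹)
      = (dyckCount m a b u : ℚ)) := by
  set k := m - 1 - b with hkdef
  have hkm : k ≤ m - 1 := by omega
  have hak : a ≤ k := by omega
  have hbk : m - 1 - k = b := by omega
  have hD : PowerSeries.mk (fun u => (dyckCount m a b u : ℚ)) = S5.G m k a := by
    ext u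
    rw [PowerSeries.coeff_mk, S5.coeff_G]
    rw [S5.dyck_eq_wc' m a b u k hm hkdef hak hkm]
    have : S5.wc m k (k - a + 2*u) a = S5.wc m k ((k - a) + (a - k) + 2*u) a := by
      congr 1; omega
    rw [this]
  have hfirst : S5.cP a * S5.cP b = S5.cP m * (S5.G m k a) := by
    rw [S5.chainLow m k hkm a hak]
    calc S5.cP a * S5.cP b = S5.cP a * (S5.cP m * S5.G m k 0) := by
          rw [S5.main_inv m k hm hkm, hbk]
      _ = S5.cP m * (S5.cP a * S5.G m k 0) := by ring
  have hfirst' : (chebP a : PowerSeries ℚ) * (chebP b : PowerSeries ℚ)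
      = (chebP m : PowerSeries ℚ) * PowerSeries.mk (fun u => (dyckCount m a b u : ℚ)) := by
    rw [hD]
    exact hfirst
  refine ⟨hfirst', ?_⟩
  intro u
  rw [hfirst']
  have hC : PowerSeries.constantCoeff (R := ℚ) (chebP m : PowerSeries ℚ) ≠ 0 := by
    have := S5.constCoeff_cP m
    rw [S5.cP] at this
    rw [this]
    norm_num
  have hcancel : (chebP m : PowerSeries ℚ) *
      PowerSeries.mk (fun u => (dyckCount m a b u : ℚ)) * ((chebP m : PowerSeries ℚ))⁻¹
      = PowerSeries.mk (fun u => (dyckCount m a b u : ℚ)) := by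
    rw [mul_comm ((chebP m : PowerSeries ℚ)) (PowerSeries.mk fun u => (dyckCount m a b u : ℚ)),
      mul_assoc, PowerSeries.mul_inv_cancel _ hC, mul_one]
  rw [hcancel, PowerSeries.coeff_mk]
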